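/- The exposure-based IPS estimator is consistent: for an infinite i.i.d. sequence of logged interactions (q_i, y_i, c_i) generated by the logging policy π₀ and the position-based click model, the estimator Û_N(π) = (1/N) Σ_{i=1}^N Σ_{d∈D_{q_i}} (ρ(d)/ρ₀(d)) · c_i(d) converges almost surely to U(π) as N → ∞. -/

import Mathlib

open Finset

noncomputable section

/-- Examination probability that document `d` receives under ranking `y`
(an injective assignment of `K` documents of the candidate set to positions `1,…,K`);
documents not placed at any of the top-`K` positions get examination probability `0`. -/
def exam {Doc : Type*} [DecidableEq Doc] {Dq : Finset Doc} {K : ℕ}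
    (E : Fin K → ℝ) (y : Fin K ↪ {x : Doc // x ∈ Dq}) (d : {x : Doc // x ∈ Dq}) : ℝ :=
  ∑ k : Fin K, if y k = d then E k else 0

/-- Expected exposure `ρ(d)` of document `d` under a ranking policy `π`. -/
def expExposure {Doc : Type*} [DecidableEq Doc] {Dq : Finset Doc} {K : ℕ}
    (E : Fin K → ℝ) (π : (Fin K ↪ {x : Doc // x ∈ Dq}) → ℝ)
    (d : {x : Doc // x ∈ Dq}) : ℝ :=
  ∑ y : Fin K ↪ {x : Doc // x ∈ Dq}, π y * exam E y d

/-- Real-valued click indicator. -/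
def ind (b : Bool) : ℝ := if b then 1 else 0

/-- A single logged interaction: a query `q`, a displayed ranking `y` of its candidate set,
and a click vector `c` on its candidate set. -/
abbrev Interaction {Doc : Type*} (Q : Type*) (D : Q → Finset Doc) (K : ℕ) :=
  Σ q : Q, (Fin K ↪ {x : Doc // x ∈ D q}) × ({x : Doc // x ∈ D q} → Bool)

/-- Probability of a sequence of `N` i.i.d. logged interactions: each interaction draws a
query from `Pq`, then a ranking and clicks from the per-query joint distribution `μ`. -/
def logProb {Doc : Type*} {Q : Type*} [Fintype Q] {D : Q → Finset Doc} {K N : ℕ}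
    (Pq : Q → ℝ)
    (μ : ∀ q : Q, ((Fin K ↪ {x : Doc // x ∈ D q}) × ({x : Doc // x ∈ D q} → Bool)) → ℝ)
    (ω : Fin N → Interaction Q D K) : ℝ :=
  ∏ i : Fin N, Pq (ω i).1 * μ (ω i).1 (ω i).2

/-- The exposure-based IPS estimator
`Û(π) = (1/N) ∑_{i=1}^N ∑_{d∈D_{q_i}} (ρ(d)/ρ₀(d)) · c_i(d)`. -/
def ipsEstimate {Doc : Type*} [DecidableEq Doc] {Q : Type*} {D : Q → Finset Doc} {K N : ℕ}
    (E : Fin K → ℝ)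
    (π π₀ : ∀ q : Q, (Fin K ↪ {x : Doc // x ∈ D q}) → ℝ)
    (ω : Fin N → Interaction Q D K) : ℝ :=
  (1 / (N : ℝ)) * ∑ i : Fin N, ∑ d : {x : Doc // x ∈ D (ω i).1},
    (expExposure E (π (ω i).1) d / expExposure E (π₀ (ω i).1) d) * ind ((ω i).2.2 d)

/-- The true utility `U(π) = E_q[ ∑_{d∈D_q} ρ(d) · P(R=1|d,q) ]`. -/
def trueUtility {Doc : Type*} [DecidableEq Doc] {Q : Type*} [Fintype Q] {D : Q → Finset Doc}
    {K : ℕ} (E : Fin K → ℝ) (Pq : Q → ℝ)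
    (π : ∀ q : Q, (Fin K ↪ {x : Doc // x ∈ D q}) → ℝ)
    (rel : ∀ q : Q, {x : Doc // x ∈ D q} → ℝ) : ℝ :=
  ∑ q, Pq q * ∑ d : {x : Doc // x ∈ D q}, expExposure E (π q) d * rel q d


/-- The per-interaction exposure-based IPS term
`∑_{d∈D_{q_i}} (ρ(d)/ρ₀(d)) · c_i(d)` of a single logged interaction. -/
def ipsTerm {Doc : Type*} [DecidableEq Doc] {Q : Type*} {D : Q → Finset Doc} {K : ℕ}
    (E : Fin K → ℝ)
    (π π₀ : ∀ q : Q, (Fin K ↪ {x : Doc // x ∈ D q}) → ℝ)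
    (x : Interaction Q D K) : ℝ :=
  ∑ d : {x' : Doc // x' ∈ D x.1},
    (expExposure E (π x.1) d / expExposure E (π₀ x.1) d) * ind (x.2.2 d)

/-- Interactions form a finite type; we endow it with the discrete σ-algebra. -/
instance {Doc : Type*} {Q : Type*} (D : Q → Finset Doc) (K : ℕ) :
    MeasurableSpace (Interaction Q D K) := ⊤

open MeasureTheory ProbabilityTheory Filter

/-- the exposure-based IPS estimator is consistent: for an infinite i.i.d.
sequence of logged interactions `(q_i, y_i, c_i)` generated by the logging policy `π₀` and
the position-based click model, the estimator
`Û_N(π) = (1/N) ∑_{i=1}^N ∑_{d∈D_{q_i}} (ρ(d)/ρ₀(d))·c_i(d)`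
converges almost surely to `U(π)` as `N → ∞`. -/
theorem ips_consistent
    {Doc : Type*} [DecidableEq Doc]
    {Q : Type*} [Fintype Q] [DecidableEq Q]
    -- distribution over queries
    (Pq : Q → ℝ) (hPq0 : ∀ q, 0 ≤ Pq q) (hPq1 : ∑ q, Pq q = 1)
    -- candidate document sets and examination probabilities
    (D : Q → Finset Doc) (K : ℕ)
    (E : Fin K → ℝ) (hE : ∀ k, 0 ≤ E k ∧ E k ≤ 1)
    (rel : ∀ q : Q, {x : Doc // x ∈ D q} → ℝ)
    (hrel : ∀ q d, 0 ≤ rel q d ∧ rel q d ≤ 1)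
    -- the new policy and the logging policy
    (π π₀ : ∀ q : Q, (Fin K ↪ {x : Doc // x ∈ D q}) → ℝ)
    (hπ0 : ∀ q y, 0 ≤ π q y) (hπ1 : ∀ q, ∑ y, π q y = 1)
    (hπ₀0 : ∀ q y, 0 ≤ π₀ q y) (hπ₀1 : ∀ q, ∑ y, π₀ q y = 1)
    -- strictly positive logging exposure
    (hρ₀pos : ∀ q d, 0 < expExposure E (π₀ q) d)
    -- per-query joint distribution of the displayed ranking and the clicks
    (μ : ∀ q : Q, ((Fin K ↪ {x : Doc // x ∈ D q}) × ({x : Doc // x ∈ D q} → Bool)) → ℝ)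
    (hμ0 : ∀ q ω, 0 ≤ μ q ω)
    -- the ranking-marginal of the joint distribution is the logging policy `π₀`
    (hmarg : ∀ q y, ∑ c : {x : Doc // x ∈ D q} → Bool, μ q (y, c) = π₀ q y)
    -- position-based click model: conditionally on the displayed ranking `y`, document `d`
    -- is clicked with probability `P(E=1|rank(d|y)) · P(R=1|d,q)`
    (hclick : ∀ q d y, ∑ c : {x : Doc // x ∈ D q} → Bool, μ q (y, c) * ind (c d)
        = π₀ q y * (exam E y d * rel q d))
    -- the underlying probability space and the infinite i.i.d. interaction sequence
    {Ω : Type*} [MeasurableSpace Ω] (P : Measure Ω) [IsProbabilityMeasure P]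
    (X : ℕ → Ω → Interaction Q D K)
    (hmeas : ∀ i, Measurable (X i))
    -- the interactions are independent …
    (hindep : iIndepFun X P)
    -- … and identically distributed: each interaction picks a query from the query
    -- distribution, and then a ranking `y ∼ π₀(·|q)` together with clicks from the
    -- position-based click model (jointly given by `μ q`)
    (hdist : ∀ i, ∀ x : Interaction Q D K,
        P (X i ⁻¹' {x}) = ENNReal.ofReal (Pq x.1 * μ x.1 x.2)) :
    ∀ᵐ ω ∂P, Tendsto
      (fun N : ℕ => (1 / (N : ℝ)) * ∑ i ∈ Finset.range N, ipsTerm E π π₀ (X i ω))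
      atTop (nhds (trueUtility E Pq π rel)) := by
  classical
  haveI : MeasurableSingletonClass (Interaction Q D K) :=
    ⟨fun _ => MeasurableSpace.measurableSet_top⟩
  -- the real-valued per-interaction random variables
  set Y : ℕ → Ω → ℝ := fun i ω => ipsTerm E π π₀ (X i ω) with hY
  have hfmeas : Measurable (ipsTerm E π π₀ (Doc := Doc) (Q := Q) (D := D) (K := K)) :=
    measurable_from_top
  have hYmeas : ∀ i, Measurable (Y i) := fun i => hfmeas.comp (hmeas i)
  -- boundedness
  set C : ℝ := ∑ x : Interaction Q D K, |ipsTerm E π π₀ x| with hC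
  have hbound : ∀ i ω, ‖Y i ω‖ ≤ C := by
    intro i ω
    rw [Real.norm_eq_abs]
    exact Finset.single_le_sum (f := fun x => |ipsTerm E π π₀ x|)
      (fun x _ => abs_nonneg _) (Finset.mem_univ _)
  have hint : Integrable (Y 0) P :=
    ⟨(hYmeas 0).aestronglyMeasurable,
      MeasureTheory.HasFiniteIntegral.of_bounded (C := C)
        (Filter.Eventually.of_forall (hbound 0))⟩
  -- identical distribution
  have hmap : ∀ i, P.map (X i) = P.map (X 0) := by
    intro i
    apply MeasureTheory.Measure.ext_of_singleton
    intro a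
    rw [Measure.map_apply (hmeas i) (measurableSet_singleton a),
      Measure.map_apply (hmeas 0) (measurableSet_singleton a), hdist i a, hdist 0 a]
  have hidentX : ∀ i, IdentDistrib (X i) (X 0) P P := fun i =>
    ⟨(hmeas i).aemeasurable, (hmeas 0).aemeasurable, hmap i⟩
  have hident : ∀ i, IdentDistrib (Y i) (Y 0) P P := fun i =>
    (hidentX i).comp hfmeas
  have hpair : Pairwise (Function.onFun (IndepFun · · P) Y) := fun i j hij =>
    (hindep.indepFun hij).comp hfmeas hfmeas
  -- compute the expectation
  have hexp : P[Y 0] = trueUtility E Pq π rel := by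
    haveI : IsProbabilityMeasure (P.map (X 0)) :=
      MeasureTheory.Measure.isProbabilityMeasure_map (hmeas 0).aemeasurable
    have h1 : P[Y 0] = ∫ x, ipsTerm E π π₀ x ∂(P.map (X 0)) :=
      (MeasureTheory.integral_map (hmeas 0).aemeasurable
        hfmeas.aestronglyMeasurable).symm
    rw [h1, MeasureTheory.integral_fintype (MeasureTheory.Integrable.of_finite)]
    have h2 : ∀ x : Interaction Q D K,
        ((P.map (X 0)) {x}).toReal = Pq x.1 * μ x.1 x.2 := by
      intro x
      rw [Measure.map_apply (hmeas 0) (measurableSet_singleton x), hdist 0 x,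
        ENNReal.toReal_ofReal (mul_nonneg (hPq0 x.1) (hμ0 x.1 x.2))]
    simp only [Measure.real, h2, smul_eq_mul]
    rw [← Finset.univ_sigma_univ, Finset.sum_sigma]
    unfold trueUtility
    apply Finset.sum_congr rfl
    intro q _
    rw [Fintype.sum_prod_type]
    have key : ∀ d : {x : Doc // x ∈ D q},
        ∑ y : Fin K ↪ {x : Doc // x ∈ D q},
          ∑ c : {x : Doc // x ∈ D q} → Bool,
            μ q (y, c) * ((expExposure E (π q) d / expExposure E (π₀ q) d) * ind (c d))
        = expExposure E (π q) d * rel q d := by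
      intro d
      have : ∀ y : Fin K ↪ {x : Doc // x ∈ D q},
          ∑ c : {x : Doc // x ∈ D q} → Bool,
            μ q (y, c) * ((expExposure E (π q) d / expExposure E (π₀ q) d) * ind (c d))
          = (expExposure E (π q) d / expExposure E (π₀ q) d) *
            (π₀ q y * (exam E y d * rel q d)) := by
        intro y
        rw [← hclick q d y, Finset.mul_sum]
        apply Finset.sum_congr rfl
        intro c _
        ring
      simp only [this]
      rw [← Finset.mul_sum]
      have hsum : ∑ y : Fin K ↪ {x : Doc // x ∈ D q}, π₀ q y * (exam E y d * rel q d)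
          = expExposure E (π₀ q) d * rel q d := by
        unfold expExposure
        rw [Finset.sum_mul]
        apply Finset.sum_congr rfl
        intro y _
        ring
      rw [hsum]
      have hne := (hρ₀pos q d).ne'
      field_simp
    have hterm : ∀ (y : Fin K ↪ {x : Doc // x ∈ D q}) (c : {x : Doc // x ∈ D q} → Bool),
        Pq (⟨q, (y, c)⟩ : Interaction Q D K).1 * μ q (y, c)
            * ipsTerm E π π₀ (⟨q, (y, c)⟩ : Interaction Q D K)
        = Pq q * ∑ d : {x : Doc // x ∈ D q},
            μ q (y, c) * ((expExposure E (π q) d / expExposure E (π₀ q) d) * ind (c d)) := by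
      intro y c
      unfold ipsTerm
      rw [mul_assoc, Finset.mul_sum]
    simp only [hterm, ← Finset.mul_sum]
    congr 1
    simp only [Finset.mul_sum]
    rw [Finset.sum_congr rfl fun y (_ : y ∈ Finset.univ) => Finset.sum_comm,
      Finset.sum_comm]
    exact Finset.sum_congr rfl fun d _ => key d
  -- strong law of large numbers
  have hslln := ProbabilityTheory.strong_law_ae_real Y hint hpair hident
  rw [hexp] at hslln
  filter_upwards [hslln] with ω hω
  have : (fun N : ℕ => (1 / (N : ℝ)) * ∑ i ∈ Finset.range N, ipsTerm E π π₀ (X i ω))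
      = fun n : ℕ => (∑ i ∈ Finset.range n, Y i ω) / n := by
    funext n
    rw [one_div, inv_mul_eq_div]
  rw [this]
  exact hω
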